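/- Let x*, y*, p*, q* > 0 be real numbers and let (a,b), (c,d) ∈ ℝ² be unit vectors (a² + b² = 1, c² + d² = 1) with s := a·d − b·c ≠ 0. Define the 4×4 real matrices A_correct = −diag(x*, x*, p*, p*) − M_c, where M_c has rows [(y*−x*)a², (y*−x*)ab, p*d², −p*cd], [(y*−x*)ab, (y*−x*)b², −p*cd, p*c²], [x*b², −x*ab, (q*−p*)c², (q*−p*)cd], [−x*ab, x*a², (q*−p*)cd, (q*−p*)d²], and A_flipped = −diag(x*, x*, p*, p*) − M_f, where M_f has rows [(y*−x*)c², (y*−x*)cd, p*b², −p*ab], [(y*−x*)cd, (y*−x*)d², −p*ab, p*a²], [x*d², −x*cd, (q*−p*)a², (q*−p*)ab], [−x*cd, x*c², (q*−p*)ab, (q*−p*)b²]. Then A_correct and A_flipped have the same characteristic polynomial, namely (λ + q*)(λ + y*)(λ² + (p* + x*)λ + p*·x*·s²), all their eigenvalues are real and negative, and hence both matrices are Hurwitz. -/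

import Mathlib

open Polynomial

lemma det_fin_four' {R : Type*} [CommRing R] (M : Matrix (Fin 4) (Fin 4) R) :
    M.det =
      M 0 0 * (M 1 1 * (M 2 2 * M 3 3 - M 2 3 * M 3 2) - M 1 2 * (M 2 1 * M 3 3 - M 2 3 * M 3 1)
        + M 1 3 * (M 2 1 * M 3 2 - M 2 2 * M 3 1))
    - M 0 1 * (M 1 0 * (M 2 2 * M 3 3 - M 2 3 * M 3 2) - M 1 2 * (M 2 0 * M 3 3 - M 2 3 * M 3 0)
        + M 1 3 * (M 2 0 * M 3 2 - M 2 2 * M 3 0))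
    + M 0 2 * (M 1 0 * (M 2 1 * M 3 3 - M 2 3 * M 3 1) - M 1 1 * (M 2 0 * M 3 3 - M 2 3 * M 3 0)
        + M 1 3 * (M 2 0 * M 3 1 - M 2 1 * M 3 0))
    - M 0 3 * (M 1 0 * (M 2 1 * M 3 2 - M 2 2 * M 3 1) - M 1 1 * (M 2 0 * M 3 2 - M 2 2 * M 3 0)
        + M 1 2 * (M 2 0 * M 3 1 - M 2 1 * M 3 0)) := by
  simp [Matrix.det_succ_row_zero, Fin.sum_univ_succ, Fin.succAbove,
    show (Fin.succ 2 : Fin 4) = 3 from rfl, show (Fin.succ 0 : Fin 4) = 1 from rfl,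
    show (Fin.succ 1 : Fin 4) = 2 from rfl, show (Fin.castSucc 2 : Fin 4) = 2 from rfl,
    show (Fin.castSucc 0 : Fin 4) = 0 from rfl, show (Fin.castSucc 1 : Fin 4) = 1 from rfl]
  ring

lemma aux_roots (q y r1 r2 : ℝ) (hq : 0 < q) (hy : 0 < y) (h1 : r1 < 0) (h2 : r2 < 0)
    (P : Polynomial ℝ)
    (hP : P = (X + C q) * (X + C y) * ((X - C r1) * (X - C r2)))
    (μ : ℂ) (h : (P.map (algebraMap ℝ ℂ)).IsRoot μ) : μ.im = 0 ∧ μ.re < 0 := by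
  simp only [hP, IsRoot.def, Polynomial.map_mul, Polynomial.map_add, Polynomial.map_sub,
    Polynomial.map_X, Polynomial.map_C, eval_mul, eval_add, eval_sub, eval_X, eval_C,
    mul_eq_zero, Complex.coe_algebraMap] at h
  rcases h with (h | h) | (h | h)
  · have : μ = -(q:ℂ) := by linear_combination h
    subst this
    constructor
    · simp
    · simpa using hq
  · have : μ = -(y:ℂ) := by linear_combination h
    subst this
    constructor
    · simp
    · simpa using hy
  · have : μ = (r1:ℂ) := by linear_combination h
    subst this
    exact ⟨by simp, by simpa using h1⟩
  · have : μ = (r2:ℂ) := by linear_combination h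
    subst this
    exact ⟨by simp, by simpa using h2⟩

set_option maxHeartbeats 4000000 in
set_option maxRecDepth 8000 in
/-- the Jacobians of the (1B2D) link dynamics at the correct and
at the flipped equilibrium have the same characteristic polynomial, namely
`(λ + q*)(λ + y*)(λ² + (p* + x*)λ + p*x*s²)`, all eigenvalues are real and
negative, and hence both matrices are Hurwitz. -/
theorem stmt_15 (x y p q a b c d : ℝ)
    (hx : 0 < x) (hy : 0 < y) (hp : 0 < p) (hq : 0 < q)
    (hab : a ^ 2 + b ^ 2 = 1) (hcd : c ^ 2 + d ^ 2 = 1)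
    (s : ℝ) (hs : s = a * d - b * c) (hs0 : s ≠ 0)
    (Acor Aflip : Matrix (Fin 4) (Fin 4) ℝ)
    (hAcor : Acor = -(Matrix.diagonal ![x, x, p, p]) -
      !![(y - x) * a ^ 2, (y - x) * (a * b), p * d ^ 2, -(p * (c * d));
         (y - x) * (a * b), (y - x) * b ^ 2, -(p * (c * d)), p * c ^ 2;
         x * b ^ 2, -(x * (a * b)), (q - p) * c ^ 2, (q - p) * (c * d);
         -(x * (a * b)), x * a ^ 2, (q - p) * (c * d), (q - p) * d ^ 2])
    (hAflip : Aflip = -(Matrix.diagonal ![x, x, p, p]) -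
      !![(y - x) * c ^ 2, (y - x) * (c * d), p * b ^ 2, -(p * (a * b));
         (y - x) * (c * d), (y - x) * d ^ 2, -(p * (a * b)), p * a ^ 2;
         x * d ^ 2, -(x * (c * d)), (q - p) * a ^ 2, (q - p) * (a * b);
         -(x * (c * d)), x * c ^ 2, (q - p) * (a * b), (q - p) * b ^ 2]) :
    Acor.charpoly = Aflip.charpoly ∧
    Acor.charpoly = (X + C q) * (X + C y) * (X ^ 2 + C (p + x) * X + C (p * x * s ^ 2)) ∧
    (∀ μ : ℂ, ((Acor.map (algebraMap ℝ ℂ)).charpoly).IsRoot μ → μ.im = 0 ∧ μ.re < 0) ∧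
    (∀ μ : ℂ, ((Aflip.map (algebraMap ℝ ℂ)).charpoly).IsRoot μ → μ.im = 0 ∧ μ.re < 0) := by
  subst hs
  have hcor : Acor.charpoly =
      (X + C q) * (X + C y) * (X ^ 2 + C (p + x) * X + C (p * x * (a * d - b * c) ^ 2)) := by
    apply Polynomial.funext; intro t
    rw [Matrix.charpoly, show (eval t : Polynomial ℝ → ℝ) = ⇑(evalRingHom t) from rfl,
      RingHom.map_det]
    rw [det_fin_four']
    simp [Matrix.map_apply, Matrix.charmatrix_apply, hAcor, Matrix.diagonal_apply, coe_evalRingHom]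
    linear_combination ((1:ℝ)*x*y*p*q*c^2 +
      (-1:ℝ)*x*y*p*q*c^2*d^2 +
      (-1:ℝ)*x*y*p*q*c^4 +
      (-1:ℝ)*x*y*p*q*b^2*d^4 +
      (-1:ℝ)*x*y*p*q*b^2*c^2*d^2 +
      (-2:ℝ)*x*y*p*q*a*b*c*d^3 +
      (-2:ℝ)*x*y*p*q*a*b*c^3*d +
      (-1:ℝ)*x*y*p*q*a^2*c^2*d^2 +
      (-1:ℝ)*x*y*p*q*a^2*c^4 +
      (1:ℝ)*x*y*p^2 +
      (-1:ℝ)*x*y*p^2*d^2 +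
      (-2:ℝ)*x*y*p^2*c^2 +
      (1:ℝ)*x*y*p^2*c^2*d^2 +
      (1:ℝ)*x*y*p^2*c^4 +
      (-1:ℝ)*x*y*p^2*b^2*d^2 +
      (1:ℝ)*x*y*p^2*b^2*d^4 +
      (1:ℝ)*x*y*p^2*b^2*c^2*d^2 +
      (-2:ℝ)*x*y*p^2*a*b*c*d +
      (2:ℝ)*x*y*p^2*a*b*c*d^3 +
      (2:ℝ)*x*y*p^2*a*b*c^3*d +
      (-1:ℝ)*x*y*p^2*a^2*c^2 +
      (1:ℝ)*x*y*p^2*a^2*c^2*d^2 +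
      (1:ℝ)*x*y*p^2*a^2*c^4 +
      (-1:ℝ)*x^2*p*q*d^2 +
      (-1:ℝ)*x^2*p*q*c^2 +
      (1:ℝ)*x^2*p*q*b^2*d^4 +
      (1:ℝ)*x^2*p*q*b^2*c^2*d^2 +
      (2:ℝ)*x^2*p*q*a*b*c*d^3 +
      (2:ℝ)*x^2*p*q*a*b*c^3*d +
      (1:ℝ)*x^2*p*q*a^2*c^2*d^2 +
      (1:ℝ)*x^2*p*q*a^2*c^4 +
      (-1:ℝ)*x^2*p^2 +
      (1:ℝ)*x^2*p^2*d^2 +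
      (1:ℝ)*x^2*p^2*c^2 +
      (1:ℝ)*x^2*p^2*b^2*d^2 +
      (-1:ℝ)*x^2*p^2*b^2*d^4 +
      (-1:ℝ)*x^2*p^2*b^2*c^2*d^2 +
      (2:ℝ)*x^2*p^2*a*b*c*d +
      (-2:ℝ)*x^2*p^2*a*b*c*d^3 +
      (-2:ℝ)*x^2*p^2*a*b*c^3*d +
      (1:ℝ)*x^2*p^2*a^2*c^2 +
      (-1:ℝ)*x^2*p^2*a^2*c^2*d^2 +
      (-1:ℝ)*x^2*p^2*a^2*c^4 +
      (1:ℝ)*t*y*p*q*d^2 +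
      (1:ℝ)*t*y*p*q*c^2 +
      (1:ℝ)*t*y*p^2 +
      (-1:ℝ)*t*y*p^2*d^2 +
      (-1:ℝ)*t*y*p^2*c^2 +
      (-2:ℝ)*t*x*p*q*d^2 +
      (-1:ℝ)*t*x*p*q*c^2 +
      (-1:ℝ)*t*x*p*q*c^2*d^2 +
      (-1:ℝ)*t*x*p*q*c^4 +
      (-1:ℝ)*t*x*p^2 +
      (1:ℝ)*t*x*p^2*d^2 +
      (1:ℝ)*t*x*p^2*c^2*d^2 +
      (1:ℝ)*t*x*p^2*c^4 +
      (1:ℝ)*t*x*y*q*d^2 +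
      (1:ℝ)*t*x*y*q*c^2 +
      (2:ℝ)*t*x*y*p +
      (-2:ℝ)*t*x*y*p*d^2 +
      (-2:ℝ)*t*x*y*p*c^2 +
      (-1:ℝ)*t*x*y*p*b^2*d^2 +
      (-2:ℝ)*t*x*y*p*a*b*c*d +
      (-1:ℝ)*t*x*y*p*a^2*c^2 +
      (-1:ℝ)*t*x^2*q*d^2 +
      (-1:ℝ)*t*x^2*q*c^2 +
      (-2:ℝ)*t*x^2*p +
      (1:ℝ)*t*x^2*p*d^2 +
      (1:ℝ)*t*x^2*p*c^2 +
      (1:ℝ)*t*x^2*p*b^2*d^2 +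
      (2:ℝ)*t*x^2*p*a*b*c*d +
      (1:ℝ)*t*x^2*p*a^2*c^2 +
      (1:ℝ)*t^2*y*q*d^2 +
      (1:ℝ)*t^2*y*q*c^2 +
      (2:ℝ)*t^2*y*p +
      (-1:ℝ)*t^2*y*p*d^2 +
      (-1:ℝ)*t^2*y*p*c^2 +
      (-1:ℝ)*t^2*x*q*d^2 +
      (-1:ℝ)*t^2*x*q*c^2 +
      (-2:ℝ)*t^2*x*p +
      (1:ℝ)*t^2*x*y +
      (-1:ℝ)*t^2*x^2 +
      (1:ℝ)*t^3*y +
      (-1:ℝ)*t^3*x) * hab +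
      ((-1:ℝ)*x*y*p*q*c^2 +
      (-1:ℝ)*x*y*p*q*b^2*d^2 +
      (1:ℝ)*x*y*p*q*b^2*c^2 +
      (-2:ℝ)*x*y*p*q*a*b*c*d +
      (-1:ℝ)*x*y*p^2 +
      (1:ℝ)*x*y*p^2*c^2 +
      (1:ℝ)*x*y*p^2*b^2*d^2 +
      (-1:ℝ)*x*y*p^2*b^2*c^2 +
      (2:ℝ)*x*y*p^2*a*b*c*d +
      (1:ℝ)*t*y*p*q +
      (-1:ℝ)*t*y*p^2 +
      (-1:ℝ)*t*x*p*q*c^2 +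
      (-1:ℝ)*t*x*p*q*b^2*d^2 +
      (1:ℝ)*t*x*p*q*b^2*c^2 +
      (-2:ℝ)*t*x*p*q*a*b*c*d +
      (-1:ℝ)*t*x*p^2 +
      (1:ℝ)*t*x*p^2*c^2 +
      (1:ℝ)*t*x*p^2*b^2*d^2 +
      (-1:ℝ)*t*x*p^2*b^2*c^2 +
      (2:ℝ)*t*x*p^2*a*b*c*d +
      (1:ℝ)*t*x*y*q +
      (-2:ℝ)*t*x*y*p +
      (1:ℝ)*t^2*p*q +
      (-1:ℝ)*t^2*p^2 +
      (1:ℝ)*t^2*y*q +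
      (-1:ℝ)*t^2*y*p +
      (1:ℝ)*t^2*x*q +
      (-2:ℝ)*t^2*x*p +
      (1:ℝ)*t^3*q +
      (-1:ℝ)*t^3*p) * hcd
  have hflip : Aflip.charpoly =
      (X + C q) * (X + C y) * (X ^ 2 + C (p + x) * X + C (p * x * (a * d - b * c) ^ 2)) := by
    apply Polynomial.funext; intro t
    rw [Matrix.charpoly, show (eval t : Polynomial ℝ → ℝ) = ⇑(evalRingHom t) from rfl,
      RingHom.map_det]
    rw [det_fin_four']
    simp [Matrix.map_apply, Matrix.charmatrix_apply, hAflip, Matrix.diagonal_apply, coe_evalRingHom]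
    linear_combination ((1:ℝ)*x*y*p*q*c^2 +
      (-1:ℝ)*x*y*p*q*c^2*d^2 +
      (-1:ℝ)*x*y*p*q*c^4 +
      (-1:ℝ)*x*y*p*q*b^2*d^4 +
      (-1:ℝ)*x*y*p*q*b^2*c^2*d^2 +
      (-2:ℝ)*x*y*p*q*a*b*c*d^3 +
      (-2:ℝ)*x*y*p*q*a*b*c^3*d +
      (-1:ℝ)*x*y*p*q*a^2*c^2*d^2 +
      (-1:ℝ)*x*y*p*q*a^2*c^4 +
      (-1:ℝ)*x*y*p^2*d^2 +
      (-1:ℝ)*x*y*p^2*c^2 +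
      (1:ℝ)*x*y*p^2*b^2*d^4 +
      (1:ℝ)*x*y*p^2*b^2*c^2*d^2 +
      (2:ℝ)*x*y*p^2*a*b*c*d^3 +
      (2:ℝ)*x*y*p^2*a*b*c^3*d +
      (1:ℝ)*x*y*p^2*a^2*c^2*d^2 +
      (1:ℝ)*x*y*p^2*a^2*c^4 +
      (1:ℝ)*x^2*p*q +
      (-1:ℝ)*x^2*p*q*d^2 +
      (-2:ℝ)*x^2*p*q*c^2 +
      (1:ℝ)*x^2*p*q*c^2*d^2 +
      (1:ℝ)*x^2*p*q*c^4 +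
      (-1:ℝ)*x^2*p*q*b^2*d^2 +
      (1:ℝ)*x^2*p*q*b^2*d^4 +
      (1:ℝ)*x^2*p*q*b^2*c^2*d^2 +
      (-2:ℝ)*x^2*p*q*a*b*c*d +
      (2:ℝ)*x^2*p*q*a*b*c*d^3 +
      (2:ℝ)*x^2*p*q*a*b*c^3*d +
      (-1:ℝ)*x^2*p*q*a^2*c^2 +
      (1:ℝ)*x^2*p*q*a^2*c^2*d^2 +
      (1:ℝ)*x^2*p*q*a^2*c^4 +
      (-1:ℝ)*x^2*p^2 +
      (1:ℝ)*x^2*p^2*d^2 +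
      (1:ℝ)*x^2*p^2*c^2 +
      (1:ℝ)*x^2*p^2*b^2*d^2 +
      (-1:ℝ)*x^2*p^2*b^2*d^4 +
      (-1:ℝ)*x^2*p^2*b^2*c^2*d^2 +
      (2:ℝ)*x^2*p^2*a*b*c*d +
      (-2:ℝ)*x^2*p^2*a*b*c*d^3 +
      (-2:ℝ)*x^2*p^2*a*b*c^3*d +
      (1:ℝ)*x^2*p^2*a^2*c^2 +
      (-1:ℝ)*x^2*p^2*a^2*c^2*d^2 +
      (-1:ℝ)*x^2*p^2*a^2*c^4 +
      (1:ℝ)*t*y*p*q*d^2 +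
      (1:ℝ)*t*y*p*q*c^2 +
      (-1:ℝ)*t*y*p^2*d^2 +
      (-1:ℝ)*t*y*p^2*c^2 +
      (2:ℝ)*t*x*p*q +
      (-2:ℝ)*t*x*p*q*d^2 +
      (-2:ℝ)*t*x*p*q*c^2 +
      (-1:ℝ)*t*x*p*q*b^2*d^2 +
      (-2:ℝ)*t*x*p*q*a*b*c*d +
      (-1:ℝ)*t*x*p*q*a^2*c^2 +
      (-2:ℝ)*t*x*p^2 +
      (1:ℝ)*t*x*p^2*d^2 +
      (1:ℝ)*t*x*p^2*c^2 +
      (1:ℝ)*t*x*p^2*b^2*d^2 +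
      (2:ℝ)*t*x*p^2*a*b*c*d +
      (1:ℝ)*t*x*p^2*a^2*c^2 +
      (1:ℝ)*t*x*y*q*d^2 +
      (1:ℝ)*t*x*y*q*c^2 +
      (-2:ℝ)*t*x*y*p*d^2 +
      (-1:ℝ)*t*x*y*p*c^2 +
      (-1:ℝ)*t*x*y*p*c^2*d^2 +
      (-1:ℝ)*t*x*y*p*c^4 +
      (1:ℝ)*t*x^2*q +
      (-1:ℝ)*t*x^2*q*d^2 +
      (-1:ℝ)*t*x^2*q*c^2 +
      (-1:ℝ)*t*x^2*p +
      (1:ℝ)*t*x^2*p*d^2 +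
      (1:ℝ)*t*x^2*p*c^2*d^2 +
      (1:ℝ)*t*x^2*p*c^4 +
      (1:ℝ)*t^2*p*q +
      (-1:ℝ)*t^2*p^2 +
      (1:ℝ)*t^2*y*q*d^2 +
      (1:ℝ)*t^2*y*q*c^2 +
      (-1:ℝ)*t^2*y*p*d^2 +
      (-1:ℝ)*t^2*y*p*c^2 +
      (2:ℝ)*t^2*x*q +
      (-1:ℝ)*t^2*x*q*d^2 +
      (-1:ℝ)*t^2*x*q*c^2 +
      (-2:ℝ)*t^2*x*p +
      (1:ℝ)*t^3*q +
      (-1:ℝ)*t^3*p) * hab +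
      ((-1:ℝ)*x*y*p*q*c^2 +
      (-1:ℝ)*x*y*p*q*b^2*d^2 +
      (1:ℝ)*x*y*p*q*b^2*c^2 +
      (-2:ℝ)*x*y*p*q*a*b*c*d +
      (-1:ℝ)*x^2*p*q +
      (1:ℝ)*x^2*p*q*c^2 +
      (1:ℝ)*x^2*p*q*b^2*d^2 +
      (-1:ℝ)*x^2*p*q*b^2*c^2 +
      (2:ℝ)*x^2*p*q*a*b*c*d +
      (1:ℝ)*t*y*p*q +
      (-2:ℝ)*t*x*p*q +
      (1:ℝ)*t*x*y*q +
      (-1:ℝ)*t*x*y*p*c^2 +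
      (-1:ℝ)*t*x*y*p*b^2*d^2 +
      (1:ℝ)*t*x*y*p*b^2*c^2 +
      (-2:ℝ)*t*x*y*p*a*b*c*d +
      (-1:ℝ)*t*x^2*q +
      (-1:ℝ)*t*x^2*p +
      (1:ℝ)*t*x^2*p*c^2 +
      (1:ℝ)*t*x^2*p*b^2*d^2 +
      (-1:ℝ)*t*x^2*p*b^2*c^2 +
      (2:ℝ)*t*x^2*p*a*b*c*d +
      (1:ℝ)*t^2*y*q +
      (1:ℝ)*t^2*y*p +
      (-1:ℝ)*t^2*x*q +
      (-2:ℝ)*t^2*x*p +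
      (1:ℝ)*t^2*x*y +
      (-1:ℝ)*t^2*x^2 +
      (1:ℝ)*t^3*y +
      (-1:ℝ)*t^3*x) * hcd
  -- real negative roots of the quadratic factor
  have hs2pos : 0 < (a * d - b * c) ^ 2 := by positivity
  have hs2le : (a * d - b * c) ^ 2 ≤ 1 := by
    nlinarith [sq_nonneg (a * c + b * d), sq_nonneg (a*d - b*c)]
  set D : ℝ := (p + x) ^ 2 - 4 * (p * x * (a * d - b * c) ^ 2) with hD
  have hD0 : 0 ≤ D := by nlinarith [sq_nonneg (p - x)]
  set r : ℝ := Real.sqrt D with hr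
  have hr2 : r ^ 2 = D := Real.sq_sqrt hD0
  have hrlt : r < p + x := by
    rw [hr]
    refine (Real.sqrt_lt' (by linarith)).2 ?_
    rw [hD]
    nlinarith [mul_pos (mul_pos hp hx) hs2pos]
  have hr0 : 0 ≤ r := Real.sqrt_nonneg _
  set r1 : ℝ := (-(p + x) + r) / 2 with hr1d
  set r2 : ℝ := (-(p + x) - r) / 2 with hr2d
  have hr1neg : r1 < 0 := by rw [hr1d]; linarith
  have hr2neg : r2 < 0 := by rw [hr2d]; linarith
  have hsum : p + x = -(r1 + r2) := by rw [hr1d, hr2d]; ring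
  have hprod : p * x * (a * d - b * c) ^ 2 = r1 * r2 := by
    rw [hr1d, hr2d]
    have : r ^ 2 = (p + x) ^ 2 - 4 * (p * x * (a * d - b * c) ^ 2) := by rw [hr2, hD]
    linarith [this]
  have hfac : (X : Polynomial ℝ) ^ 2 + C (p + x) * X + C (p * x * (a * d - b * c) ^ 2) =
      (X - C r1) * (X - C r2) := by
    rw [hprod, hsum, map_neg, map_add, map_mul]
    ring
  refine ⟨hcor.trans hflip.symm, hcor, ?_, ?_⟩
  · intro μ hμ
    rw [Matrix.charpoly_map] at hμ
    exact aux_roots q y r1 r2 hq hy hr1neg hr2neg _ (by rw [hcor, hfac]) μ hμ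
  · intro μ hμ
    rw [Matrix.charpoly_map] at hμ
    exact aux_roots q y r1 r2 hq hy hr1neg hr2neg _ (by rw [hflip, hfac]) μ hμ
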